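/- Let W be an N×N real matrix with nonnegative entries, positive diagonal entries, row sums equal to 1, and strongly connected digraph; let q be its left Perron–Frobenius eigenvector, Q = diag(q), 𝐐 = Q ⊗ I_n, and σ̄ = σ_{N−1}(Q^{1/2} W Q^{−1/2}). Then: (i) (qᵀ ⊗ I_n)(W ⊗ I_n) x = (qᵀ ⊗ I_n) x for all x ∈ ℝ^{Nn}, so the subspace E⊥^Q = {x ∈ ℝ^{Nn} : (qᵀ ⊗ I_n)x = 0} is invariant under W ⊗ I_n; and (ii) for every x_⊥ ∈ E⊥^Q, ‖(W ⊗ I_n) x_⊥‖_𝐐 ≤ σ̄ ‖x_⊥‖_𝐐. -/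

import Mathlib

open Matrix Kronecker

/-- `P`-weighted norm `‖x‖_P = √(xᵀ P x)`. -/
noncomputable def wnorm {ι : Type*} [Fintype ι] (P : Matrix ι ι ℝ) (x : ι → ℝ) : ℝ :=
  Real.sqrt (x ⬝ᵥ P.mulVec x)

/-- The singular values of a real square matrix, sorted in nondecreasing order
`σ₁(A) ≤ … ≤ σ_N(A)`; `sortedSingVals A i` is `σ_{i+1}(A)` (0-based index `i`). -/
noncomputable def sortedSingVals {N : ℕ} (A : Matrix (Fin N) (Fin N) ℝ) : Fin N → ℝ :=
  fun i =>
    Real.sqrt (((Matrix.isHermitian_conjTranspose_mul_self A).eigenvalues ∘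
      Tuple.sort (Matrix.isHermitian_conjTranspose_mul_self A).eigenvalues) i)

lemma spectral_key {N : ℕ} (hN : 1 < N) (S : Matrix (Fin N) (Fin N) ℝ)
    (hS : S.IsHermitian)
    (hpsd : ∀ u : Fin N → ℝ, 0 ≤ u ⬝ᵥ S.mulVec u)
    (hcontr : ∀ u : Fin N → ℝ, u ⬝ᵥ S.mulVec u ≤ u ⬝ᵥ u)
    (w : Fin N → ℝ) (hw : w ≠ 0) (hSw : S.mulVec w = w) :
    0 ≤ (hS.eigenvalues ∘ Tuple.sort hS.eigenvalues) ⟨N-2, Nat.sub_lt (by omega) two_pos⟩ ∧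
    ∀ u : Fin N → ℝ, u ⬝ᵥ w = 0 →
      u ⬝ᵥ S.mulVec u ≤
        (hS.eigenvalues ∘ Tuple.sort hS.eigenvalues) ⟨N-2, Nat.sub_lt (by omega) two_pos⟩ * (u ⬝ᵥ u) := by
  have hST : Sᵀ = S := by
    have := hS.eq
    rwa [Matrix.conjTranspose_eq_transpose_of_trivial] at this
  set L := hS.eigenvalues with hLdef
  set B := hS.eigenvectorBasis with hBdef
  have hinner : ∀ (x z : EuclideanSpace ℝ (Fin N)),
      (inner (𝕜 := ℝ) x z) = (x : Fin N → ℝ) ⬝ᵥ (z : Fin N → ℝ) := by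
    intro x z
    simp [PiLp.inner_apply, RCLike.inner_apply, dotProduct, mul_comm]
  -- Parseval
  have hpars : ∀ y z : Fin N → ℝ,
      y ⬝ᵥ z = ∑ j, ((B j : Fin N → ℝ) ⬝ᵥ y) * ((B j : Fin N → ℝ) ⬝ᵥ z) := by
    intro y z
    have h := B.sum_inner_mul_inner (WithLp.toLp 2 y : EuclideanSpace ℝ (Fin N)) (WithLp.toLp 2 z : EuclideanSpace ℝ (Fin N))
    simp only [hinner, WithLp.ofLp_toLp] at h
    rw [← h]
    refine (Finset.sum_congr rfl fun j _ => ?_).symm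
    rw [dotProduct_comm]
  -- key dot product identity
  have hdot : ∀ (y : Fin N → ℝ) (i : Fin N),
      (B i : Fin N → ℝ) ⬝ᵥ S.mulVec y = L i * ((B i : Fin N → ℝ) ⬝ᵥ y) := by
    intro y i
    have hmv : S *ᵥ (B i : Fin N → ℝ) = L i • (B i : Fin N → ℝ) := hS.mulVec_eigenvectorBasis i
    rw [dotProduct_mulVec, ← Matrix.mulVec_transpose, hST, hmv, smul_dotProduct]
    rfl
  have hBB : ∀ i, (B i : Fin N → ℝ) ⬝ᵥ (B i : Fin N → ℝ) = 1 := by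
    intro i
    have h2 := hinner (B i) (B i)
    rw [real_inner_self_eq_norm_sq] at h2
    rw [← h2, B.orthonormal.1 i]
    norm_num
  have hL1 : ∀ i, L i ≤ 1 := by
    intro i
    have h := hcontr (B i)
    rw [hdot (B i) i, hBB i] at h
    simpa using h
  have hL0 : ∀ i, 0 ≤ L i := by
    intro i
    have h := hpsd (B i)
    rw [hdot (B i) i, hBB i] at h
    simpa using h
  -- eigenvector equation for w
  have hwc : ∀ i, L i * ((B i : Fin N → ℝ) ⬝ᵥ w) = (B i : Fin N → ℝ) ⬝ᵥ w := by
    intro i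
    rw [← hdot w i, hSw]
  have hex : ∃ i, (B i : Fin N → ℝ) ⬝ᵥ w ≠ 0 := by
    by_contra h
    push_neg at h
    have : w ⬝ᵥ w = 0 := by
      rw [hpars w w]
      simp [h]
    exact hw (by simpa [dotProduct_self_eq_zero] using this)
  obtain ⟨i₀, hi₀⟩ := hex
  have hLi₀ : L i₀ = 1 := by
    have h1 : (L i₀ - 1) * ((B i₀ : Fin N → ℝ) ⬝ᵥ w) = 0 := by
      have := hwc i₀; ring_nf; linarith [hwc i₀]
    rcases mul_eq_zero.1 h1 with h | h
    · linarith
    · exact absurd h hi₀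
  -- sorted structure
  set σ := Tuple.sort L with hσdef
  have hmono := Tuple.monotone_sort L
  set kk : Fin N := σ ⟨N-1, by omega⟩ with hkk
  set lam : ℝ := (L ∘ σ) ⟨N-2, by omega⟩ with hlam
  have hmax : ∀ i, i ≠ kk → L i ≤ lam := by
    intro i hi
    have h1 : σ.symm i ≠ ⟨N-1, by omega⟩ := by
      intro h
      apply hi
      rw [← Equiv.apply_symm_apply σ i, h]
    have hlt : (σ.symm i : ℕ) < N := (σ.symm i).isLt
    have hne : (σ.symm i : ℕ) ≠ N-1 := fun h => h1 (Fin.ext h)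
    have h2 : σ.symm i ≤ (⟨N-2, by omega⟩ : Fin N) := by
      rw [Fin.le_def]
      simp only []
      omega
    have := hmono h2
    simpa [Function.comp, hσdef, hlam, Equiv.apply_symm_apply] using this
  have hlam0 : 0 ≤ lam := hL0 _
  refine ⟨hlam0, fun u hu => ?_⟩
  have hquad : u ⬝ᵥ S.mulVec u = ∑ j, L j * ((B j : Fin N → ℝ) ⬝ᵥ u)^2 := by
    rw [hpars u (S.mulVec u)]
    refine Finset.sum_congr rfl fun j _ => ?_
    rw [hdot u j]; ring
  have hnorm : u ⬝ᵥ u = ∑ j, ((B j : Fin N → ℝ) ⬝ᵥ u)^2 := by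
    rw [hpars u u]
    exact Finset.sum_congr rfl fun j _ => by ring
  rw [hquad, hnorm, Finset.mul_sum]
  by_cases hc : 1 ≤ lam
  · exact Finset.sum_le_sum fun j _ =>
      mul_le_mul_of_nonneg_right (le_trans (hL1 j) hc) (sq_nonneg _)
  · push_neg at hc
    have hwz : ∀ j, j ≠ kk → ((B j : Fin N → ℝ) ⬝ᵥ w) = 0 := by
      intro j hj
      have h1 : (L j - 1) * ((B j : Fin N → ℝ) ⬝ᵥ w) = 0 := by linarith [hwc j]
      rcases mul_eq_zero.1 h1 with h | h
      · exact absurd (hmax j hj) (by linarith)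
      · exact h
    have hik : i₀ = kk := by
      by_contra h; exact hi₀ (hwz i₀ h)
    have hck : ((B kk : Fin N → ℝ) ⬝ᵥ u) = 0 := by
      have hsum : ∑ j, ((B j : Fin N → ℝ) ⬝ᵥ u) * ((B j : Fin N → ℝ) ⬝ᵥ w) = 0 := by
        rw [← hpars u w, hu]
      rw [Finset.sum_eq_single kk (fun j _ hj => by rw [hwz j hj, mul_zero])
        (fun h => absurd (Finset.mem_univ kk) h)] at hsum
      rcases mul_eq_zero.1 hsum with h | h
      · exact h
      · exact absurd h (hik ▸ hi₀)
    refine Finset.sum_le_sum fun j _ => ?_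
    by_cases hj : j = kk
    · subst hj
      rw [hck]
      simp
    · exact mul_le_mul_of_nonneg_right (hmax j hj) (sq_nonneg _)


lemma jensen_step {N : ℕ} (W : Matrix (Fin N) (Fin N) ℝ)
    (hWnonneg : ∀ i j, 0 ≤ W i j) (hWrow : ∀ i, ∑ j, W i j = 1)
    (q : Fin N → ℝ) (hqW : Matrix.vecMul q W = q) (hq0 : ∀ i, 0 ≤ q i)
    (v : Fin N → ℝ) :
    ∑ i, q i * (W.mulVec v i)^2 ≤ ∑ i, q i * (v i)^2 := by
  have step1 : ∀ i, (W.mulVec v i)^2 ≤ ∑ k, W i k * (v k)^2 := by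
    intro i
    have hcs := Finset.sum_mul_sq_le_sq_mul_sq Finset.univ
      (fun k => Real.sqrt (W i k)) (fun k => Real.sqrt (W i k) * v k)
    have e1 : ∀ k, Real.sqrt (W i k) * (Real.sqrt (W i k) * v k) = W i k * v k := by
      intro k
      rw [← mul_assoc, Real.mul_self_sqrt (hWnonneg i k)]
    have e2 : ∀ k, Real.sqrt (W i k) ^ 2 = W i k := fun k => Real.sq_sqrt (hWnonneg i k)
    simp only [e1, e2] at hcs
    have e3 : ∀ k, (Real.sqrt (W i k) * v k)^2 = W i k * (v k)^2 := by
      intro k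
      rw [mul_pow, e2]
    simp only [e3] at hcs
    calc (W.mulVec v i)^2 = (∑ k, W i k * v k)^2 := rfl
      _ ≤ (∑ k, W i k) * ∑ k, W i k * (v k)^2 := hcs
      _ = ∑ k, W i k * (v k)^2 := by rw [hWrow i, one_mul]
  calc ∑ i, q i * (W.mulVec v i)^2
      ≤ ∑ i, q i * ∑ k, W i k * (v k)^2 :=
        Finset.sum_le_sum fun i _ => mul_le_mul_of_nonneg_left (step1 i) (hq0 i)
    _ = ∑ k, (∑ i, q i * W i k) * (v k)^2 := by
        simp_rw [Finset.mul_sum, Finset.sum_mul]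
        rw [Finset.sum_comm]
        congr 1; funext k; congr 1; funext i; ring
    _ = ∑ k, q k * (v k)^2 := by
        refine Finset.sum_congr rfl fun k _ => ?_
        have := congrFun hqW k
        rw [Matrix.vecMul] at this
        simp only [dotProduct] at this
        rw [this]

lemma column_bound {N : ℕ} (hN : 1 < N)
    (W : Matrix (Fin N) (Fin N) ℝ)
    (hWnonneg : ∀ i j, 0 ≤ W i j) (hWrow : ∀ i, ∑ j, W i j = 1)
    (q : Fin N → ℝ) (hqpos : ∀ i, 0 < q i) (hqW : Matrix.vecMul q W = q)
    (A : Matrix (Fin N) (Fin N) ℝ)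
    (hA : A = Matrix.diagonal (fun i => Real.sqrt (q i)) * W *
      Matrix.diagonal (fun i => (Real.sqrt (q i))⁻¹)) :
    0 ≤ ((Matrix.isHermitian_conjTranspose_mul_self A).eigenvalues ∘
        Tuple.sort (Matrix.isHermitian_conjTranspose_mul_self A).eigenvalues) ⟨N-2, Nat.sub_lt (by omega) two_pos⟩ ∧
    ∀ v : Fin N → ℝ, (∑ i, q i * v i) = 0 →
      ∑ i, q i * (W.mulVec v i)^2 ≤
        ((Matrix.isHermitian_conjTranspose_mul_self A).eigenvalues ∘
          Tuple.sort (Matrix.isHermitian_conjTranspose_mul_self A).eigenvalues) ⟨N-2, Nat.sub_lt (by omega) two_pos⟩ *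
        ∑ i, q i * (v i)^2 := by
  have hsq : ∀ i, 0 < Real.sqrt (q i) := fun i => Real.sqrt_pos.2 (hqpos i)
  have hsqne : ∀ i, Real.sqrt (q i) ≠ 0 := fun i => (hsq i).ne'
  have hqs : ∀ i, Real.sqrt (q i) * Real.sqrt (q i) = q i :=
    fun i => Real.mul_self_sqrt (hqpos i).le
  set S := Aᴴ * A with hSdef
  have hAH : Aᴴ = Aᵀ := Matrix.conjTranspose_eq_transpose_of_trivial A
  have hAmul : ∀ v : Fin N → ℝ,
      A.mulVec (fun i => Real.sqrt (q i) * v i) = fun i => Real.sqrt (q i) * W.mulVec v i := by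
    intro v
    funext i
    show ∑ k, A i k * (Real.sqrt (q k) * v k) = Real.sqrt (q i) * ∑ k, W i k * v k
    rw [Finset.mul_sum]
    refine Finset.sum_congr rfl fun k _ => ?_
    rw [hA, Matrix.mul_diagonal, Matrix.diagonal_mul]
    have hk := hsqne k
    field_simp
  have hquadS : ∀ u : Fin N → ℝ, u ⬝ᵥ S.mulVec u = (A.mulVec u) ⬝ᵥ (A.mulVec u) := by
    intro u
    rw [hSdef, ← Matrix.mulVec_mulVec, Matrix.dotProduct_mulVec, hAH,
      Matrix.vecMul_transpose]
  have hpsd : ∀ u : Fin N → ℝ, 0 ≤ u ⬝ᵥ S.mulVec u := by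
    intro u
    rw [hquadS]
    exact Finset.sum_nonneg fun i _ => mul_self_nonneg _
  have hscale : ∀ v : Fin N → ℝ,
      ((fun i => Real.sqrt (q i) * v i) ⬝ᵥ S.mulVec (fun i => Real.sqrt (q i) * v i)) =
        ∑ i, q i * (W.mulVec v i)^2 := by
    intro v
    rw [hquadS, hAmul v]
    refine Finset.sum_congr rfl fun i _ => ?_
    show (Real.sqrt (q i) * _) * (Real.sqrt (q i) * _) = _
    conv_rhs => rw [← hqs i]
    ring
  have hunorm : ∀ v : Fin N → ℝ,
      ((fun i => Real.sqrt (q i) * v i) ⬝ᵥ (fun i => Real.sqrt (q i) * v i)) =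
        ∑ i, q i * (v i)^2 := by
    intro v
    refine Finset.sum_congr rfl fun i _ => ?_
    show (Real.sqrt (q i) * _) * (Real.sqrt (q i) * _) = _
    conv_rhs => rw [← hqs i]
    ring
  have hcontr : ∀ u : Fin N → ℝ, u ⬝ᵥ S.mulVec u ≤ u ⬝ᵥ u := by
    intro u
    have hu : u = fun i => Real.sqrt (q i) * ((Real.sqrt (q i))⁻¹ * u i) := by
      funext i
      rw [← mul_assoc, mul_inv_cancel₀ (hsqne i), one_mul]
    rw [hu, hscale, hunorm]
    exact jensen_step W hWnonneg hWrow q hqW (fun i => (hqpos i).le) _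
  set w : Fin N → ℝ := fun i => Real.sqrt (q i) with hwdef
  have hw : w ≠ 0 := by
    intro h
    have := congrFun h ⟨0, by omega⟩
    exact hsqne _ this
  have hAw : A.mulVec w = w := by
    have h1 := hAmul (fun _ => 1)
    have e1 : (fun i => Real.sqrt (q i) * (fun _ : Fin N => (1:ℝ)) i) = w := by
      funext i; simp [hwdef]
    have e2 : W.mulVec (fun _ => 1) = fun _ => (1:ℝ) := by
      funext i
      show ∑ k, W i k * 1 = 1
      simp [hWrow i]
    rw [e1, e2] at h1
    rw [h1]
    funext i; simp [hwdef]
  have hATw : Aᴴ.mulVec w = w := by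
    rw [hAH, Matrix.mulVec_transpose]
    funext k
    show ∑ i, w i * A i k = w k
    have : ∀ i, w i * A i k = (q i * W i k) * (Real.sqrt (q k))⁻¹ := by
      intro i
      rw [hA, Matrix.mul_diagonal, Matrix.diagonal_mul, hwdef]
      simp only []
      conv_rhs => rw [← hqs i]
      ring
    simp only [this]
    rw [← Finset.sum_mul]
    have hq : ∑ i, q i * W i k = q k := by
      have := congrFun hqW k
      rw [Matrix.vecMul] at this
      simpa [dotProduct] using this
    rw [hq]
    show q k * (Real.sqrt (q k))⁻¹ = Real.sqrt (q k)
    rw [inv_eq_one_div, mul_one_div, div_eq_iff (hsqne k)]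
    exact (hqs k).symm
  have hSw : S.mulVec w = w := by
    rw [hSdef, ← Matrix.mulVec_mulVec, hAw, hATw]
  obtain ⟨h0, hkey⟩ := spectral_key hN S (Matrix.isHermitian_conjTranspose_mul_self A)
    hpsd hcontr w hw hSw
  refine ⟨h0, fun v hv => ?_⟩
  have hperp : (fun i => Real.sqrt (q i) * v i) ⬝ᵥ w = 0 := by
    rw [← hv]
    refine Finset.sum_congr rfl fun i _ => ?_
    show Real.sqrt (q i) * v i * Real.sqrt (q i) = q i * v i
    conv_rhs => rw [← hqs i]
    ring
  have := hkey (fun i => Real.sqrt (q i) * v i) hperp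
  rwa [hscale, hunorm] at this

/-- (i) `(qᵀ ⊗ I_n)(W ⊗ I_n)x = (qᵀ ⊗ I_n)x`, so
`E⊥^Q = {x : (qᵀ ⊗ I_n)x = 0}` is invariant under `W ⊗ I_n`; (ii) on `E⊥^Q` the map
`W ⊗ I_n` is `σ̄`-contractive in the `𝐐`-norm, `σ̄ = σ_{N-1}(Q^{1/2} W Q^{-1/2})`. -/
theorem stmt9
    (N n : ℕ) (hN : 1 < N)
    (W : Matrix (Fin N) (Fin N) ℝ)
    (hWnonneg : ∀ i j, 0 ≤ W i j)
    (hWdiag : ∀ i, 0 < W i i)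
    (hWrow : ∀ i, ∑ j, W i j = 1)
    (hWconn : ∀ i j, ∃ m : ℕ, 1 ≤ m ∧ 0 < (W ^ m) i j)
    (q : Fin N → ℝ) (hqpos : ∀ i, 0 < q i)
    (hqW : Matrix.vecMul q W = q) (hqsum : ∑ i, q i = 1)
    (Q : Matrix (Fin N) (Fin N) ℝ) (hQ : Q = Matrix.diagonal q)
    (bQ : Matrix (Fin N × Fin n) (Fin N × Fin n) ℝ)
    (hbQ : bQ = Q ⊗ₖ (1 : Matrix (Fin n) (Fin n) ℝ))
    (σbar : ℝ)
    (hσbar : σbar = sortedSingVals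
      (Matrix.diagonal (fun i => Real.sqrt (q i)) * W *
        Matrix.diagonal (fun i => (Real.sqrt (q i))⁻¹)) ⟨N - 2, by omega⟩) :
    (∀ x : Fin N × Fin n → ℝ, ∀ j : Fin n,
        (∑ i, q i * ((W ⊗ₖ (1 : Matrix (Fin n) (Fin n) ℝ)).mulVec x) (i, j)) =
          ∑ i, q i * x (i, j)) ∧
      (∀ xperp : Fin N × Fin n → ℝ,
        (∀ j : Fin n, (∑ i, q i * xperp (i, j)) = 0) →
          wnorm bQ ((W ⊗ₖ (1 : Matrix (Fin n) (Fin n) ℝ)).mulVec xperp) ≤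
            σbar * wnorm bQ xperp) := by
  have hqcol : ∀ k, ∑ i, q i * W i k = q k := by
    intro k
    have := congrFun hqW k
    rw [Matrix.vecMul] at this
    simpa [dotProduct] using this
  have hmv : ∀ (x : Fin N × Fin n → ℝ) (i : Fin N) (j : Fin n),
      ((W ⊗ₖ (1 : Matrix (Fin n) (Fin n) ℝ)).mulVec x) (i, j) = ∑ k, W i k * x (k, j) := by
    intro x i j
    show ∑ p : Fin N × Fin n, (W ⊗ₖ (1 : Matrix (Fin n) (Fin n) ℝ)) (i, j) p * x p = _
    rw [Fintype.sum_prod_type]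
    refine Finset.sum_congr rfl fun k _ => ?_
    simp [Matrix.kroneckerMap_apply, Matrix.one_apply, ite_mul, mul_ite,
      Finset.sum_ite_eq, Finset.sum_ite_eq']
  constructor
  · intro x j
    simp only [hmv]
    calc ∑ i, q i * ∑ k, W i k * x (k, j)
        = ∑ k, (∑ i, q i * W i k) * x (k, j) := by
          simp_rw [Finset.mul_sum, Finset.sum_mul]
          rw [Finset.sum_comm]
          refine Finset.sum_congr rfl fun k _ => Finset.sum_congr rfl fun i _ => by ring
      _ = ∑ i, q i * x (i, j) := by
          refine Finset.sum_congr rfl fun k _ => ?_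
          rw [hqcol k]
  · intro xperp hx
    have hquad : ∀ x : Fin N × Fin n → ℝ,
        x ⬝ᵥ bQ.mulVec x = ∑ j, ∑ i, q i * (x (i, j))^2 := by
      intro x
      have hbmv : ∀ i j, (bQ.mulVec x) (i, j) = q i * x (i, j) := by
        intro i j
        rw [hbQ, hQ]
        show ∑ p : Fin N × Fin n,
          (Matrix.diagonal q ⊗ₖ (1 : Matrix (Fin n) (Fin n) ℝ)) (i, j) p * x p = _
        rw [Fintype.sum_prod_type]
        simp [Matrix.kroneckerMap_apply, Matrix.diagonal_apply, Matrix.one_apply,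
          ite_mul, mul_ite, Finset.sum_ite_eq, Finset.sum_ite_eq']
      show ∑ p : Fin N × Fin n, x p * (bQ.mulVec x) p = _
      rw [Fintype.sum_prod_type, Finset.sum_comm]
      refine Finset.sum_congr rfl fun j _ => Finset.sum_congr rfl fun i _ => ?_
      rw [hbmv i j]
      ring
    set A : Matrix (Fin N) (Fin N) ℝ := Matrix.diagonal (fun i => Real.sqrt (q i)) * W *
      Matrix.diagonal (fun i => (Real.sqrt (q i))⁻¹) with hAdef
    obtain ⟨h0, hcol⟩ := column_bound hN W hWnonneg hWrow q hqpos hqW A hAdef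
    set lam : ℝ := ((Matrix.isHermitian_conjTranspose_mul_self A).eigenvalues ∘
      Tuple.sort (Matrix.isHermitian_conjTranspose_mul_self A).eigenvalues) ⟨N-2, by omega⟩ with hlam
    have hσ : σbar = Real.sqrt lam := by rw [hσbar]; rfl
    set y := (W ⊗ₖ (1 : Matrix (Fin n) (Fin n) ℝ)).mulVec xperp with hy
    have hycol : ∀ j, ∀ i, y (i, j) = W.mulVec (fun k => xperp (k, j)) i := by
      intro j i
      rw [hy, hmv]
      rfl
    have hmain : y ⬝ᵥ bQ.mulVec y ≤ lam * (xperp ⬝ᵥ bQ.mulVec xperp) := by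
      rw [hquad y, hquad xperp, Finset.mul_sum]
      refine Finset.sum_le_sum fun j _ => ?_
      have := hcol (fun k => xperp (k, j)) (hx j)
      calc ∑ i, q i * (y (i, j))^2
          = ∑ i, q i * (W.mulVec (fun k => xperp (k, j)) i)^2 := by
            refine Finset.sum_congr rfl fun i _ => by rw [hycol j i]
        _ ≤ lam * ∑ i, q i * (xperp (i, j))^2 := this
    have hxnn : 0 ≤ xperp ⬝ᵥ bQ.mulVec xperp := by
      rw [hquad]
      exact Finset.sum_nonneg fun j _ => Finset.sum_nonneg fun i _ =>
        mul_nonneg (hqpos i).le (sq_nonneg _)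
    rw [wnorm, wnorm, hσ]
    calc Real.sqrt (y ⬝ᵥ bQ.mulVec y)
        ≤ Real.sqrt (lam * (xperp ⬝ᵥ bQ.mulVec xperp)) := Real.sqrt_le_sqrt hmain
      _ = Real.sqrt lam * Real.sqrt (xperp ⬝ᵥ bQ.mulVec xperp) := Real.sqrt_mul h0 _
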